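/- Let P be a finite poset and C an abelian category. For any injective object Q of C and c ∈ P, the principal injective P-module Q^{↓c} (equal to Q at all b ≤ c with identity maps, and 0 elsewhere) is an injective object in the functor category C^P. -/

import Mathlib

open CategoryTheory CategoryTheory.Limits CategoryTheory.MonoidalCategory Opposite

universe v u

variable {P : Type} [PartialOrder P] {C : Type u} [Category.{v} C]

open Classical ZeroObject in
/-- The principal cofree `P`-module `X^{↓a}`: equal to `X` at all `b ≤ a`, with identity
structure maps there, and `0` elsewhere. -/
noncomputable def below [HasZeroObject C] [HasZeroMorphisms C] (a : P) (X : C) : P ⥤ C where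
  obj b := if b ≤ a then X else 0
  map {b c} h :=
    if hc : c ≤ a then
      eqToHom (show (if b ≤ a then X else 0) = (if c ≤ a then X else 0) by
        rw [if_pos ((leOfHom h).trans hc), if_pos hc])
    else 0
  map_id b := by
    try dsimp only
    split_ifs with h
    · simp
    · exact (((Limits.isZero_zero C).of_iso (eqToIso (if_neg h))).eq_of_src _ _)
  map_comp {b c d} h h' := by
    try dsimp only
    by_cases hd : d ≤ a
    · have hc : c ≤ a := (leOfHom h').trans hd
      simp [dif_pos hd, dif_pos hc]
    · simp [dif_neg hd]

open Classical ZeroObject in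
theorem below_objEq [HasZeroObject C] [HasZeroMorphisms C] (a : P) (X : C) (b : P) :
    (below a X).obj b = if b ≤ a then X else 0 := rfl

open Classical ZeroObject in
theorem below_isZero [HasZeroObject C] [HasZeroMorphisms C] (a : P) (X : C) {b : P}
    (hb : ¬ b ≤ a) : IsZero ((below a X).obj b) :=
  (Limits.isZero_zero C).of_iso (eqToIso (show (below a X).obj b = 0 from if_neg hb))

open Classical ZeroObject in
theorem below_mapEq [HasZeroObject C] [HasZeroMorphisms C] (a : P) (X : C) {b b' : P}
    (k : b ⟶ b') (hb' : b' ≤ a) :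
    (below a X).map k = eqToHom (show (below a X).obj b = (below a X).obj b' by
      rw [below_objEq, below_objEq, if_pos ((leOfHom k).trans hb'), if_pos hb']) := by
  simp [below, dif_pos hb']

open Classical ZeroObject in
theorem below_mapEq' [HasZeroObject C] [HasZeroMorphisms C] (a : P) (X : C) {b b' : P}
    (k : b ⟶ b') (hb' : ¬ b' ≤ a) : (below a X).map k = 0 := by
  simp [below, dif_neg hb']
  rfl

open Classical ZeroObject in
theorem below_inj [Abelian C] (Q : C) (hQ : Injective Q) (c : P) :
    Injective (below c Q) := by
  constructor
  intro F G g ι hι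
  have hc : (below c Q).obj c = Q := by rw [below_objEq, if_pos le_rfl]
  haveI : Mono (ι.app c) := inferInstance
  obtain ⟨ψ, hψ⟩ := hQ.factors (g.app c ≫ eqToHom hc) (ι.app c)
  refine ⟨{ app := fun b =>
      if hb : b ≤ c then G.map (homOfLE hb) ≫ ψ ≫ eqToHom (hc.symm.trans
        (show (below c Q).obj c = (below c Q).obj b by
          rw [below_objEq, below_objEq, if_pos hb, if_pos le_rfl]))
      else 0, naturality := ?_ }, ?_⟩
  · intro b b' k
    by_cases hb' : b' ≤ c
    · have hb : b ≤ c := (leOfHom k).trans hb'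
      rw [dif_pos hb', dif_pos hb, below_mapEq _ _ k hb']
      rw [← Category.assoc (G.map k), ← G.map_comp]
      have : (k ≫ homOfLE hb' : b ⟶ c) = homOfLE hb := Subsingleton.elim _ _
      rw [this]
      simp
    · rw [dif_neg hb', below_mapEq' _ _ k hb']
      simp
  · ext b
    dsimp only [NatTrans.comp_app]
    by_cases hb : b ≤ c
    · rw [dif_pos hb]
      have hnat := ι.naturality (homOfLE hb)
      have h2 := g.naturality (homOfLE hb)
      rw [below_mapEq _ _ (homOfLE hb) le_rfl] at h2
      rw [← Category.assoc, ← hnat]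
      rw [Category.assoc, ← Category.assoc (ι.app c), hψ]
      simp only [Category.assoc, eqToHom_trans]
      rw [← Category.assoc, h2, Category.assoc, eqToHom_trans, eqToHom_refl, Category.comp_id]
    · rw [dif_neg hb]
      simp only [comp_zero]
      exact ((below_isZero c Q hb).eq_of_tgt _ _).symm

/-- For a finite poset `P`, an abelian category `C`, an injective object `Q` of `C` and
`c ∈ P`, the principal injective `P`-module `Q^{↓c}` is injective in the functor
category `C^P`. -/
theorem stmt12 [Fintype P] [Abelian C] (Q : C) (hQ : Injective Q) (c : P) :
    Injective (below c Q) := below_inj Q hQ c
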